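/- For all m, d ≥ 2, the operator (1_d^m − d Φ_d^m) ⊗ (1_d^m + d^m Φ_d^m) is not block positive with respect to the m parties: there exists a separable state σ (the product of m two-qudit maximally entangled states shared within each party) with Tr[σ ((1 − dΦ) ⊗ (1 + d^m Φ))] = 2 − d − d^{1−m} < 0. -/

import Mathlib

open Matrix BigOperators ComplexOrder

noncomputable section

/-- Tensor product of a family of local operators, one per party/step. -/
def tensorFam {m : ℕ} {ι : Fin m → Type*} [∀ k, Fintype (ι k)]
    (A : (k : Fin m) → Matrix (ι k) (ι k) ℂ) :
    Matrix ((k : Fin m) → ι k) ((k : Fin m) → ι k) ℂ :=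
  Matrix.of fun i j => ∏ k, A k (i k) (j k)

/-- Separable operator: a sum of tensor products of positive semidefinite local operators. -/
def IsSep {m : ℕ} {ι : Fin m → Type*} [∀ k, Fintype (ι k)]
    (E : Matrix ((k : Fin m) → ι k) ((k : Fin m) → ι k) ℂ) : Prop :=
  ∃ (S : Finset ℕ) (A : ℕ → (k : Fin m) → Matrix (ι k) (ι k) ℂ),
    (∀ s ∈ S, ∀ k, (A s k).PosSemidef) ∧ E = ∑ s ∈ S, tensorFam (A s)

/-- Separable state: separable with trace one. -/
def IsSepState {m : ℕ} {ι : Fin m → Type*} [∀ k, Fintype (ι k)]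
    (σ : Matrix ((k : Fin m) → ι k) ((k : Fin m) → ι k) ℂ) : Prop :=
  IsSep σ ∧ σ.trace = 1

/-- Block positive: nonnegative mean value on every separable state. -/
def IsBlockPos {m : ℕ} {ι : Fin m → Type*} [∀ k, Fintype (ι k)]
    (E : Matrix ((k : Fin m) → ι k) ((k : Fin m) → ι k) ℂ) : Prop :=
  ∀ σ, IsSepState σ → 0 ≤ ((E * σ).trace).re

def IsPOVM {α N : Type*} [Fintype α] [Fintype N] [DecidableEq N]
    (M : α → Matrix N N ℂ) : Prop :=
  (∀ i, (M i).PosSemidef) ∧ ∑ i, M i = 1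

/-- Average success probability of a guessing strategy. -/
def succProb {α N : Type*} [Fintype α] [Fintype N]
    (η : α → ℝ) (ρ M : α → Matrix N N ℂ) : ℝ :=
  ∑ i, η i * ((ρ i * M i).trace).re
/-- The m-qudit GHZ state Φ_d^m = (1/d) Σ_{a,b} |a⋯a⟩⟨b⋯b|. -/
def ghz (m d : ℕ) : Matrix ((_ : Fin m) → Fin d) ((_ : Fin m) → Fin d) ℂ :=
  Matrix.of fun i j =>
    if (∀ k k', i k = i k') ∧ (∀ k k', j k = j k') then (d : ℂ)⁻¹ else 0

/-- Tensor product A ⊗ B of operators on two m-party spaces, with indices grouped so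
that party k holds its factors from both spaces. -/
def pairTensor {m : ℕ} {ι ι' : Fin m → Type*} [∀ k, Fintype (ι k)] [∀ k, Fintype (ι' k)]
    (A : Matrix ((k : Fin m) → ι k) ((k : Fin m) → ι k) ℂ)
    (B : Matrix ((k : Fin m) → ι' k) ((k : Fin m) → ι' k) ℂ) :
    Matrix ((k : Fin m) → ι k × ι' k) ((k : Fin m) → ι k × ι' k) ℂ :=
  Matrix.of fun i j =>
    A (fun k => (i k).1) (fun k => (j k).1) * B (fun k => (i k).2) (fun k => (j k).2)

/-- The two-qudit maximally entangled state Φ_d^2 held by a single party. -/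
def phi2 (d : ℕ) : Matrix (Fin d × Fin d) (Fin d × Fin d) ℂ :=
  Matrix.of fun p q => if p.1 = p.2 ∧ q.1 = q.2 then (d : ℂ)⁻¹ else 0

/- ### Auxiliary lemmas -/

lemma sum_diag_pair {m d : ℕ} (f : ((k : Fin m) → Fin d × Fin d) → ℂ) :
    ∑ i : (k : Fin m) → Fin d × Fin d, (if ∀ k, (i k).1 = (i k).2 then f i else 0)
      = ∑ a : Fin m → Fin d, f (fun k => (a k, a k)) := by
  classical
  rw [← Finset.sum_filter]
  refine Finset.sum_nbij' (i := fun i => fun k => (i k).1)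
    (j := fun a => fun k => (a k, a k)) ?_ ?_ ?_ ?_ ?_
  · intro i hi; simp
  · intro a _
    simp only [Finset.mem_filter, Finset.mem_univ, true_and]
    exact fun _ => trivial
  · intro i hi
    simp only [Finset.mem_filter, Finset.mem_univ, true_and] at hi
    funext k
    exact Prod.ext rfl (hi k)
  · intro a _; rfl
  · intro i hi
    simp only [Finset.mem_filter, Finset.mem_univ, true_and] at hi
    congr 1; funext k
    exact Prod.ext rfl (hi k).symm

lemma sum_const_fun {m d : ℕ} (hm : 0 < m) (f : (Fin m → Fin d) → ℂ) :
    ∑ a : Fin m → Fin d, (if ∀ k k', a k = a k' then f a else 0)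
      = ∑ v : Fin d, f (fun _ => v) := by
  classical
  rw [← Finset.sum_filter]
  refine Finset.sum_nbij' (i := fun a => a ⟨0, hm⟩) (j := fun v => fun _ => v) ?_ ?_ ?_ ?_ ?_
  · intro a _; simp
  · intro v _
    simp only [Finset.mem_filter, Finset.mem_univ, true_and]
    exact fun _ _ => trivial
  · intro a ha
    simp only [Finset.mem_filter, Finset.mem_univ, true_and] at ha
    funext k; exact ha ⟨0, hm⟩ k
  · intro v _; rfl
  · intro a ha
    simp only [Finset.mem_filter, Finset.mem_univ, true_and] at ha
    congr 1; funext k; exact ha k ⟨0, hm⟩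

lemma trace_pair_phi2 {m d : ℕ}
    (A B : Matrix ((k : Fin m) → Fin d) ((k : Fin m) → Fin d) ℂ) :
    (pairTensor A B * tensorFam (fun _ : Fin m => phi2 d)).trace
      = ((d : ℂ)⁻¹) ^ m * ∑ a : Fin m → Fin d, ∑ b, A a b * B a b := by
  classical
  have h1 : ∀ i j : (k : Fin m) → Fin d × Fin d,
      (∏ k, if (j k).1 = (j k).2 ∧ (i k).1 = (i k).2 then (d : ℂ)⁻¹ else 0)
      = if ∀ k, (i k).1 = (i k).2 then
          (if ∀ k, (j k).1 = (j k).2 then ((d : ℂ)⁻¹) ^ m else 0) else 0 := by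
    intro i j
    rw [Fintype.prod_ite_zero, Finset.prod_const, Finset.card_univ, Fintype.card_fin]
    by_cases hi : ∀ k, (i k).1 = (i k).2 <;> by_cases hj : ∀ k, (j k).1 = (j k).2 <;>
      simp [hi, hj, forall_and]
  simp only [Matrix.trace, Matrix.diag, Matrix.mul_apply, pairTensor, tensorFam, phi2,
    Matrix.of_apply]
  simp only [h1, mul_ite, mul_zero]
  simp only [Finset.sum_ite_irrel, Finset.sum_const_zero]
  rw [sum_diag_pair]
  simp only [sum_diag_pair]
  rw [Finset.mul_sum]
  refine Finset.sum_congr rfl fun a _ => ?_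
  rw [Finset.mul_sum]
  exact Finset.sum_congr rfl fun b _ => by ring

lemma phi2_psd (d : ℕ) : (phi2 d).PosSemidef := by
  rw [Matrix.posSemidef_iff_dotProduct_mulVec]
  constructor
  · ext p q
    simp only [phi2, Matrix.conjTranspose_apply, Matrix.of_apply]
    by_cases h1 : p.1 = p.2 <;> by_cases h2 : q.1 = q.2 <;> simp [h1, h2]
  · intro x
    have key : star x ⬝ᵥ (phi2 d) *ᵥ x
        = (d : ℂ)⁻¹ * (star (∑ q : Fin d × Fin d, if q.1 = q.2 then x q else 0)
            * (∑ q : Fin d × Fin d, if q.1 = q.2 then x q else 0)) := by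
      simp only [dotProduct, Matrix.mulVec, phi2, Matrix.of_apply, ite_and, ite_mul, mul_ite,
        zero_mul, mul_zero, Finset.sum_ite_irrel, Finset.sum_const_zero, Pi.star_apply,
        star_sum, apply_ite, star_zero]
      rw [Finset.sum_mul, Finset.mul_sum]
      refine Finset.sum_congr rfl fun p _ => ?_
      by_cases hp : p.1 = p.2
      · simp only [hp, if_true]
        rw [Finset.mul_sum, Finset.mul_sum, Finset.mul_sum]
        refine Finset.sum_congr rfl fun q _ => ?_
        by_cases hq : q.1 = q.2 <;> simp [hq] <;> ring
      · simp [hp]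
    rw [key]
    have h1 : (0:ℂ) ≤ (d:ℂ)⁻¹ := by
      rw [show ((d:ℂ))⁻¹ = (((d:ℝ)⁻¹ : ℝ) : ℂ) by push_cast; ring]
      rw [Complex.zero_le_real]
      positivity
    exact mul_nonneg h1 (star_mul_self_nonneg _)

lemma trace_sigma {m d : ℕ} (hd : 0 < d) :
    (tensorFam (fun _ : Fin m => phi2 d)).trace = 1 := by
  classical
  simp only [Matrix.trace, Matrix.diag, tensorFam, phi2, Matrix.of_apply, and_self]
  have h1 : ∀ i : (k : Fin m) → Fin d × Fin d,
      (∏ k, if (i k).1 = (i k).2 then (d : ℂ)⁻¹ else 0)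
      = if ∀ k, (i k).1 = (i k).2 then ((d : ℂ)⁻¹) ^ m else 0 := by
    intro i
    rw [Fintype.prod_ite_zero, Finset.prod_const, Finset.card_univ, Fintype.card_fin]
    split_ifs <;> rfl
  simp only [h1]
  rw [sum_diag_pair (f := fun _ => ((d : ℂ)⁻¹) ^ m)]
  rw [Finset.sum_const, Finset.card_univ, Fintype.card_fun, Fintype.card_fin, Fintype.card_fin,
    nsmul_eq_mul]
  have hd0 : (d : ℂ) ≠ 0 := Nat.cast_ne_zero.mpr hd.ne'
  push_cast
  rw [← mul_pow, mul_inv_cancel₀ hd0, one_pow]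

lemma sum_entries (m d : ℕ) (hm : 0 < m) (hd : 0 < d) :
    ∑ a : Fin m → Fin d, ∑ b, ((1 - (d : ℂ) • ghz m d) a b * ((1 + ((d : ℂ) ^ m) • ghz m d) a b))
      = 2 * (d : ℂ) ^ m - d - (d : ℂ) ^ (m + 1) := by
  classical
  have hd0 : (d : ℂ) ≠ 0 := Nat.cast_ne_zero.mpr hd.ne'
  set M1 : Matrix (Fin m → Fin d) (Fin m → Fin d) ℂ := 1 with hM1
  have expand : ∀ a b : Fin m → Fin d,
      (1 - (d : ℂ) • ghz m d) a b * ((1 + ((d : ℂ) ^ m) • ghz m d) a b)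
      = M1 a b * M1 a b
        + (d : ℂ) ^ m * (M1 a b * ghz m d a b) - (d : ℂ) * (ghz m d a b * M1 a b)
        - (d : ℂ) ^ (m + 1) * (ghz m d a b * ghz m d a b) := by
    intro a b
    simp only [Matrix.sub_apply, Matrix.add_apply, Matrix.smul_apply, smul_eq_mul, hM1]
    ring
  have hδδ : ∑ a : Fin m → Fin d, ∑ b, M1 a b * M1 a b = (d : ℂ) ^ m := by
    have h2 : ∀ a b : Fin m → Fin d, M1 a b * M1 a b = if a = b then (1:ℂ) else 0 := by
      intro a b
      simp only [hM1, Matrix.one_apply]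
      split_ifs <;> ring
    simp only [h2, Finset.sum_ite_eq, Finset.mem_univ, if_true]
    rw [Finset.sum_const, Finset.card_univ, Fintype.card_fun, Fintype.card_fin, Fintype.card_fin,
      nsmul_eq_mul]
    push_cast; ring
  have hdiagg : ∀ a : Fin m → Fin d, ghz m d a a
      = if ∀ k k', a k = a k' then (d : ℂ)⁻¹ else 0 := by
    intro a
    simp only [ghz, Matrix.of_apply, and_self]
  have hδg : ∑ a : Fin m → Fin d, ∑ b, M1 a b * ghz m d a b = 1 := by
    simp only [hM1, Matrix.one_apply, ite_mul, one_mul, zero_mul, Finset.sum_ite_eq,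
      Finset.mem_univ, if_true]
    simp only [hdiagg]
    rw [sum_const_fun hm (f := fun _ => (d : ℂ)⁻¹), Finset.sum_const, Finset.card_univ,
      Fintype.card_fin, nsmul_eq_mul, mul_inv_cancel₀ hd0]
  have hgδ : ∑ a : Fin m → Fin d, ∑ b, ghz m d a b * M1 a b = 1 := by
    simp only [hM1, Matrix.one_apply, mul_ite, mul_one, mul_zero, Finset.sum_ite_eq,
      Finset.mem_univ, if_true]
    simp only [hdiagg]
    rw [sum_const_fun hm (f := fun _ => (d : ℂ)⁻¹), Finset.sum_const, Finset.card_univ,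
      Fintype.card_fin, nsmul_eq_mul, mul_inv_cancel₀ hd0]
  have hgg : ∑ a : Fin m → Fin d, ∑ b, ghz m d a b * ghz m d a b = 1 := by
    have h2 : ∀ a b : Fin m → Fin d, ghz m d a b * ghz m d a b
        = if ∀ k k', a k = a k' then (if ∀ k k', b k = b k' then (d : ℂ)⁻¹ * (d : ℂ)⁻¹ else 0)
          else 0 := by
      intro a b
      simp only [ghz, Matrix.of_apply, ite_and]
      split_ifs <;> ring
    simp only [h2, Finset.sum_ite_irrel, Finset.sum_const_zero]
    rw [sum_const_fun hm]
    rw [Finset.sum_const, Finset.card_univ, Fintype.card_fin, nsmul_eq_mul]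
    rw [sum_const_fun hm (f := fun _ => (d : ℂ)⁻¹ * (d : ℂ)⁻¹)]
    rw [Finset.sum_const, Finset.card_univ, Fintype.card_fin, nsmul_eq_mul]
    field_simp
  calc ∑ a : Fin m → Fin d, ∑ b,
        ((1 - (d : ℂ) • ghz m d) a b * ((1 + ((d : ℂ) ^ m) • ghz m d) a b))
      = ∑ a : Fin m → Fin d, ∑ b,
        (M1 a b * M1 a b
        + (d : ℂ) ^ m * (M1 a b * ghz m d a b) - (d : ℂ) * (ghz m d a b * M1 a b)
        - (d : ℂ) ^ (m + 1) * (ghz m d a b * ghz m d a b)) := by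
        exact Finset.sum_congr rfl fun a _ => Finset.sum_congr rfl fun b _ => expand a b
    _ = (∑ a : Fin m → Fin d, ∑ b, M1 a b * M1 a b)
        + (d : ℂ) ^ m * (∑ a : Fin m → Fin d, ∑ b, M1 a b * ghz m d a b)
        - (d : ℂ) * (∑ a : Fin m → Fin d, ∑ b, ghz m d a b * M1 a b)
        - (d : ℂ) ^ (m + 1) * (∑ a : Fin m → Fin d, ∑ b, ghz m d a b * ghz m d a b) := by
        simp only [Finset.sum_add_distrib, Finset.sum_sub_distrib, ← Finset.mul_sum]
    _ = 2 * (d : ℂ) ^ m - d - (d : ℂ) ^ (m + 1) := by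
        rw [hδδ, hδg, hgδ, hgg]; ring

/-- (1 − dΦ_d^m) ⊗ (1 + d^m Φ_d^m) is not block positive with respect to
the m parties: the product of m two-qudit maximally entangled states (shared within each
party) is a separable state on which its mean value is 2 − d − d^{1−m} < 0. -/
theorem ghz_pair_not_blockPos (m d : ℕ) (hm : 2 ≤ m) (hd : 2 ≤ d) :
    ¬ IsBlockPos (ι := fun k : Fin m => Fin d × Fin d)
        (pairTensor (1 - (d : ℂ) • ghz m d) (1 + ((d : ℂ) ^ m) • ghz m d)) ∧
    IsSepState (ι := fun k : Fin m => Fin d × Fin d) (tensorFam (fun _ : Fin m => phi2 d)) ∧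
    ((pairTensor (1 - (d : ℂ) • ghz m d) (1 + ((d : ℂ) ^ m) • ghz m d) *
        tensorFam (fun _ : Fin m => phi2 d)).trace
      = ((2 - (d : ℝ) - ((d : ℝ) ^ (m - 1))⁻¹ : ℝ) : ℂ)) ∧
    (2 - (d : ℝ) - ((d : ℝ) ^ (m - 1))⁻¹ < 0) := by
  have hm0 : 0 < m := by omega
  have hd0 : 0 < d := by omega
  have hdC : (d : ℂ) ≠ 0 := Nat.cast_ne_zero.mpr hd0.ne'
  have htr : (pairTensor (1 - (d : ℂ) • ghz m d) (1 + ((d : ℂ) ^ m) • ghz m d) *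
        tensorFam (fun _ : Fin m => phi2 d)).trace
      = ((2 - (d : ℝ) - ((d : ℝ) ^ (m - 1))⁻¹ : ℝ) : ℂ) := by
    rw [trace_pair_phi2, sum_entries m d hm0 hd0]
    obtain ⟨n, hn⟩ : ∃ n, m = n + 1 := ⟨m - 1, by omega⟩
    subst hn
    have h1 : (n + 1) - 1 = n := by omega
    rw [h1]
    push_cast
    rw [inv_pow]
    field_simp
    ring
  have hsep : IsSepState (ι := fun k : Fin m => Fin d × Fin d)
      (tensorFam (fun _ : Fin m => phi2 d)) := by
    refine ⟨⟨{0}, fun _ _ => phi2 d, ?_, ?_⟩, trace_sigma hd0⟩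
    · intro s _ k; exact phi2_psd d
    · rw [Finset.sum_singleton]
  have hneg : 2 - (d : ℝ) - ((d : ℝ) ^ (m - 1))⁻¹ < 0 := by
    have h1 : (0:ℝ) < ((d : ℝ) ^ (m - 1))⁻¹ := by positivity
    have h2 : (2:ℝ) ≤ (d : ℝ) := by exact_mod_cast hd
    linarith
  refine ⟨?_, hsep, htr, hneg⟩
  intro hbp
  have h3 := hbp _ hsep
  rw [htr] at h3
  rw [Complex.ofReal_re] at h3
  linarith
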